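/- arXiv:2204.08635 — 2 statements merged into one kernel-verified Lean document; each statement's English description precedes it below -/
import Mathlib

section
/- Let n ≥ 1, α, t, p ∈ (0,∞), r ∈ (1,∞) and q ∈ [1,∞). There are constants C₁, C₂ > 0, independent of f, such that: if f : ℝⁿ → ℂ is measurable with ‖f‖_{(K̇E^{α,p}_{q,r})_t} < ∞, then there exist nonnegative reals (λ_k)_{k∈ℤ} and measurable functions (b_k)_{k∈ℤ} with supp(b_k) ⊆ B_k and ‖b_k‖_{(E_r^q)_t} ≤ C₁·2^{-kα} for every k (dyadic central (α,q,r)-blocks), such that f = ∑_{k∈ℤ} λ_k b_k almost everywhere and ∑_{k∈ℤ} λ_k^p ≤ C₂ ‖f‖_{(K̇E^{α,p}_{q,r})_t}^p. -/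
open MeasureTheory Metric Set ENNReal
open scoped NNReal

noncomputable section

abbrev En (n : ℕ) : Type := EuclideanSpace ℝ (Fin n)

/-- Slice norm `‖f‖_{(E_r^q)_t}` for `ℝ≥0∞`-valued functions. -/
def sliceNorm (n : ℕ) (t r : ℝ) (q : ℝ≥0∞) (g : En n → ℝ≥0∞) : ℝ≥0∞ :=
  if q = ∞ then
    essSup (fun x => ((volume (ball x t))⁻¹ * ∫⁻ y in ball x t, g y ^ r) ^ (1 / r)) volume
  else
    (∫⁻ x, (((volume (ball x t))⁻¹ * ∫⁻ y in ball x t, g y ^ r) ^ (1 / r)) ^ q.toReal) ^ (1 / q.toReal)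

/-- Slice norm of a complex-valued function. -/
def sliceNormC (n : ℕ) (t r : ℝ) (q : ℝ≥0∞) (f : En n → ℂ) : ℝ≥0∞ :=
  sliceNorm n t r q fun y => (‖f y‖₊ : ℝ≥0∞)

/-- The ball `B_k = {x : |x| ≤ 2^k}`. -/
def ballZ (n : ℕ) (k : ℤ) : Set (En n) := closedBall 0 ((2 : ℝ) ^ k)

/-- The shell `S_k = B_k \ B_{k-1}`. -/
def shell (n : ℕ) (k : ℤ) : Set (En n) := ballZ n k \ ballZ n (k - 1)

/-- Homogeneous Herz-slice norm of an `ℝ≥0∞`-valued function. -/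
def herzHom (n : ℕ) (t r : ℝ) (q : ℝ≥0∞) (α : ℝ) (p : ℝ≥0∞) (g : En n → ℝ≥0∞) : ℝ≥0∞ :=
  if p = ∞ then
    ⨆ k : ℤ, (2 : ℝ≥0∞) ^ ((k : ℝ) * α) * sliceNorm n t r q ((shell n k).indicator g)
  else
    (∑' k : ℤ, ((2 : ℝ≥0∞) ^ ((k : ℝ) * α) * sliceNorm n t r q ((shell n k).indicator g)) ^ p.toReal) ^ (1 / p.toReal)

/-- Homogeneous Herz-slice norm of a complex-valued function. -/
def herzHomC (n : ℕ) (t r : ℝ) (q : ℝ≥0∞) (α : ℝ) (p : ℝ≥0∞) (f : En n → ℂ) : ℝ≥0∞ :=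
  herzHom n t r q α p fun y => (‖f y‖₊ : ℝ≥0∞)

/-- The `k`-th piece in the non-homogeneous decomposition: `B_0` for `k = 0`, `S_k` for `k ≥ 1`. -/
def pieceN (n : ℕ) (k : ℕ) : Set (En n) := if k = 0 then ballZ n 0 else shell n k

/-- Non-homogeneous Herz-slice norm of an `ℝ≥0∞`-valued function. -/
def herzNonHom (n : ℕ) (t r : ℝ) (q : ℝ≥0∞) (α : ℝ) (p : ℝ≥0∞) (g : En n → ℝ≥0∞) : ℝ≥0∞ :=
  if p = ∞ then
    ⨆ k : ℕ, (2 : ℝ≥0∞) ^ ((k : ℝ) * α) * sliceNorm n t r q ((pieceN n k).indicator g)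
  else
    (∑' k : ℕ, ((2 : ℝ≥0∞) ^ ((k : ℝ) * α) * sliceNorm n t r q ((pieceN n k).indicator g)) ^ p.toReal) ^ (1 / p.toReal)

/-- Non-homogeneous Herz-slice norm of a complex-valued function. -/
def herzNonHomC (n : ℕ) (t r : ℝ) (q : ℝ≥0∞) (α : ℝ) (p : ℝ≥0∞) (f : En n → ℂ) : ℝ≥0∞ :=
  herzNonHom n t r q α p fun y => (‖f y‖₊ : ℝ≥0∞)

/-- Hardy–Littlewood maximal operator. -/
def maximal (n : ℕ) (f : En n → ℂ) (x : En n) : ℝ≥0∞ :=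
  ⨆ (ρ : ℝ) (_ : 0 < ρ), (volume (ball x ρ))⁻¹ * ∫⁻ y in ball x ρ, (‖f y‖₊ : ℝ≥0∞)


-- Fubini helper
lemma fub (n : ℕ) {t : ℝ} (ht : 0 < t) (h : En n → ℝ≥0∞) (hh : Measurable h) :
    ∫⁻ x, ∫⁻ y in ball x t, h y = ∫⁻ y, h y * volume (ball (0 : En n) t) := by
  set F : En n → En n → ℝ≥0∞ := fun x y => if dist x y < t then h y else 0 with hF
  have hFmeas : Measurable (Function.uncurry F) := by
    apply Measurable.ite _ (hh.comp measurable_snd) measurable_const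
    exact measurableSet_lt (by fun_prop) measurable_const
  have step1 : ∀ x, ∫⁻ y in ball x t, h y = ∫⁻ y, F x y := by
    intro x
    rw [← lintegral_indicator measurableSet_ball]
    refine lintegral_congr fun y => ?_
    by_cases hy : y ∈ ball x t
    · rw [Set.indicator_of_mem hy, hF]; simp only []
      rw [if_pos (by rwa [mem_ball, dist_comm] at hy)]
    · rw [Set.indicator_of_notMem hy, hF]; simp only []
      rw [if_neg (by rwa [mem_ball, dist_comm] at hy)]
  have step2 : ∀ y, ∫⁻ x, F x y = h y * volume (ball (0 : En n) t) := by
    intro y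
    have : ∀ x : En n, F x y = (ball y t).indicator (fun _ => h y) x := by
      intro x
      by_cases hx : x ∈ ball y t
      · rw [Set.indicator_of_mem hx, hF]; simp only []
        rw [if_pos (by rwa [mem_ball] at hx)]
      · rw [Set.indicator_of_notMem hx, hF]; simp only []
        rw [if_neg (by rwa [mem_ball] at hx)]
    simp_rw [this]
    rw [lintegral_indicator measurableSet_ball, setLIntegral_const,
      Measure.addHaar_ball_center]
  simp_rw [step1]
  rw [lintegral_lintegral_swap hFmeas.aemeasurable]
  simp_rw [step2]

-- scalar homogeneity
lemma sliceNorm_const_mul (n : ℕ) (t : ℝ) {r : ℝ} (hr : 0 < r) {q : ℝ≥0∞}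
    (hq0 : q ≠ 0) (hq' : q ≠ ∞) {c : ℝ≥0∞} (hc : c ≠ ∞) (g : En n → ℝ≥0∞) :
    sliceNorm n t r q (fun y => c * g y) = c * sliceNorm n t r q g := by
  have hrne : r ≠ 0 := hr.ne'
  have hqt : 0 < q.toReal := ENNReal.toReal_pos hq0 hq'
  have hcr : c ^ r ≠ ∞ := ENNReal.rpow_ne_top_of_nonneg hr.le hc
  have key : ∀ x : En n,
      ((volume (ball x t))⁻¹ * ∫⁻ y in ball x t, (c * g y) ^ r) ^ (1 / r)
        = c * ((volume (ball x t))⁻¹ * ∫⁻ y in ball x t, g y ^ r) ^ (1 / r) := by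
    intro x
    have : ∀ y, (c * g y) ^ r = c ^ r * g y ^ r := fun y =>
      ENNReal.mul_rpow_of_nonneg _ _ hr.le
    simp_rw [this]
    rw [lintegral_const_mul' _ _ hcr, ← mul_assoc, mul_comm (volume (ball x t))⁻¹ (c ^ r),
      mul_assoc, ENNReal.mul_rpow_of_nonneg _ _ (by positivity : (0:ℝ) ≤ 1 / r),
      ← ENNReal.rpow_mul, mul_one_div_cancel hrne, ENNReal.rpow_one]
  unfold sliceNorm
  rw [if_neg hq', if_neg hq']
  simp_rw [key]
  have : ∀ x : En n, (c * ((volume (ball x t))⁻¹ * ∫⁻ y in ball x t, g y ^ r) ^ (1 / r)) ^ q.toReal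
      = c ^ q.toReal * (((volume (ball x t))⁻¹ * ∫⁻ y in ball x t, g y ^ r) ^ (1 / r)) ^ q.toReal :=
    fun x => ENNReal.mul_rpow_of_nonneg _ _ hqt.le
  simp_rw [this]
  rw [lintegral_const_mul' _ _ (ENNReal.rpow_ne_top_of_nonneg hqt.le hc),
    ENNReal.mul_rpow_of_nonneg _ _ (by positivity : (0:ℝ) ≤ 1 / q.toReal),
    ← ENNReal.rpow_mul, mul_one_div_cancel hqt.ne', ENNReal.rpow_one]

-- slice norm of zero
lemma sliceNorm_zero_fun (n : ℕ) (t : ℝ) {r : ℝ} (hr : 0 < r) {q : ℝ≥0∞}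
    (hq0 : q ≠ 0) (hq' : q ≠ ∞) :
    sliceNorm n t r q (fun _ => 0) = 0 := by
  have hqt : 0 < q.toReal := ENNReal.toReal_pos hq0 hq'
  unfold sliceNorm
  rw [if_neg hq']
  have h1 : ∀ x : En n, (((volume (ball x t))⁻¹ * ∫⁻ y in ball x t, (0:ℝ≥0∞) ^ r) ^ (1 / r)) ^ q.toReal = 0 := by
    intro x
    rw [ENNReal.zero_rpow_of_pos hr]
    simp only [lintegral_const, zero_mul, mul_zero,
      ENNReal.zero_rpow_of_pos (by positivity : (0:ℝ) < 1 / r),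
      ENNReal.zero_rpow_of_pos hqt]
  simp_rw [h1]
  simp [ENNReal.zero_rpow_of_pos (by positivity : (0:ℝ) < 1 / q.toReal), hqt]

-- slice norm zero implies zero a.e.
lemma ae_zero_of_sliceNorm_eq_zero (n : ℕ) {t r : ℝ} (ht : 0 < t) (hr : 0 < r)
    {q : ℝ≥0∞} (hq0 : q ≠ 0) (hq' : q ≠ ∞) {g : En n → ℝ≥0∞} (hg : Measurable g)
    (h0 : sliceNorm n t r q g = 0) : g =ᵐ[volume] 0 := by
  have hqt : 0 < q.toReal := ENNReal.toReal_pos hq0 hq'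
  -- measurability of the inner quantity
  have hinner : Measurable fun x : En n => ∫⁻ y in ball x t, g y ^ r := by
    have : ∀ x : En n, ∫⁻ y in ball x t, g y ^ r
        = ∫⁻ y, (fun p : En n × En n => if dist p.1 p.2 < t then g p.2 ^ r else 0) (x, y) := by
      intro x
      rw [← lintegral_indicator measurableSet_ball]
      refine lintegral_congr fun y => ?_
      by_cases hy : y ∈ ball x t
      · rw [Set.indicator_of_mem hy]; dsimp only
        rw [if_pos (by rwa [mem_ball, dist_comm] at hy)]
      · rw [Set.indicator_of_notMem hy]; dsimp only
        rw [if_neg (by rwa [mem_ball, dist_comm] at hy)]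
    simp_rw [this]
    apply Measurable.lintegral_prod_right
    apply Measurable.ite _ ((hg.comp measurable_snd).pow_const r) measurable_const
    exact measurableSet_lt (by fun_prop) measurable_const
  have hA : Measurable fun x : En n =>
      (((volume (ball x t))⁻¹ * ∫⁻ y in ball x t, g y ^ r) ^ (1 / r)) ^ q.toReal := by
    simp_rw [Measure.addHaar_ball_center]
    exact ((measurable_const.mul hinner).pow_const _).pow_const _
  -- extract that the integral vanishes
  unfold sliceNorm at h0
  rw [if_neg hq'] at h0
  have hS : ∫⁻ x, (((volume (ball x t))⁻¹ * ∫⁻ y in ball x t, g y ^ r) ^ (1 / r)) ^ q.toReal = 0 := by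
    rcases (ENNReal.rpow_eq_zero_iff.mp h0) with ⟨h, _⟩ | ⟨_, hlt⟩
    · exact h
    · exact absurd hlt (not_lt.mpr (by positivity))
  have hae := (lintegral_eq_zero_iff hA).mp hS
  have hI : ∀ᵐ x ∂(volume : Measure (En n)), ∫⁻ y in ball x t, g y ^ r = 0 := by
    filter_upwards [hae] with x hx
    simp only [Pi.zero_apply] at hx
    rcases ENNReal.rpow_eq_zero_iff.mp hx with ⟨h, _⟩ | ⟨_, hlt⟩
    · rcases ENNReal.rpow_eq_zero_iff.mp h with ⟨h2, _⟩ | ⟨_, hlt2⟩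
      · rcases mul_eq_zero.mp h2 with h3 | h3
        · exact absurd h3 (by
            simp only [ENNReal.inv_eq_zero]
            exact (measure_ball_lt_top).ne)
        · exact h3
      · exact absurd hlt2 (not_lt.mpr (by positivity))
    · exact absurd hlt (not_lt.mpr (by positivity))
  have hint : ∫⁻ x, ∫⁻ y in ball x t, g y ^ r = 0 := by
    rw [lintegral_congr_ae (hI.mono fun x hx => hx)]
    simp
  rw [fub n ht _ (hg.pow_const r)] at hint
  have hV : volume (ball (0 : En n) t) ≠ 0 := (measure_ball_pos _ _ ht).ne'
  have hV' : volume (ball (0 : En n) t) ≠ ∞ := measure_ball_lt_top.ne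
  rw [lintegral_mul_const' _ _ hV'] at hint
  have hgr : ∫⁻ y, g y ^ r = 0 := by
    rcases mul_eq_zero.mp hint with h | h
    · exact h
    · exact absurd h hV
  have := (lintegral_eq_zero_iff (hg.pow_const r)).mp hgr
  filter_upwards [this] with y hy
  simp only [Pi.zero_apply] at hy ⊢
  rcases ENNReal.rpow_eq_zero_iff.mp hy with ⟨h, _⟩ | ⟨_, hlt⟩
  · exact h
  · exact absurd hlt (not_lt.mpr hr.le)


lemma mem_shell_iff (n : ℕ) (k : ℤ) (x : En n) :
    x ∈ shell n k ↔ (2:ℝ) ^ (k-1) < ‖x‖ ∧ ‖x‖ ≤ (2:ℝ) ^ k := by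
  simp only [shell, ballZ, mem_diff, mem_closedBall, dist_zero_right, not_le]
  tauto

lemma mem_shell_self (n : ℕ) (x : En n) (hx : x ≠ 0) :
    x ∈ shell n ⌈Real.logb 2 ‖x‖⌉ := by
  have hxn : 0 < ‖x‖ := norm_pos_iff.mpr hx
  set a := Real.logb 2 ‖x‖ with ha
  have hxa : (2:ℝ) ^ a = ‖x‖ := Real.rpow_logb two_pos (by norm_num) hxn
  rw [mem_shell_iff]
  constructor
  · have h1 : ((⌈a⌉ - 1 : ℤ) : ℝ) < a := by
      push_cast
      linarith [Int.ceil_lt_add_one a]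
    calc (2:ℝ) ^ (⌈a⌉ - 1) = (2:ℝ) ^ (((⌈a⌉ - 1 : ℤ)):ℝ) := (Real.rpow_intCast 2 _).symm
      _ < (2:ℝ) ^ a := (Real.rpow_lt_rpow_left_iff one_lt_two).mpr h1
      _ = ‖x‖ := hxa
  · calc ‖x‖ = (2:ℝ) ^ a := hxa.symm
      _ ≤ (2:ℝ) ^ ((⌈a⌉ : ℤ) : ℝ) := (Real.rpow_le_rpow_left_iff one_lt_two).mpr (Int.le_ceil a)
      _ = (2:ℝ) ^ (⌈a⌉ : ℤ) := Real.rpow_intCast 2 _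

lemma shell_unique {n : ℕ} {j k : ℤ} {x : En n} (hj : x ∈ shell n j) (hk : x ∈ shell n k) :
    j = k := by
  rw [mem_shell_iff] at hj hk
  by_contra hne
  have key : ∀ a b : ℤ, a < b → ((2:ℝ)^(a-1) < ‖x‖ ∧ ‖x‖ ≤ 2^a) →
      ((2:ℝ)^(b-1) < ‖x‖ ∧ ‖x‖ ≤ 2^b) → False := by
    intro a b hab h1 h2
    have : (2:ℝ) ^ a ≤ (2:ℝ) ^ (b-1) := zpow_le_zpow_right₀ one_le_two (by omega)
    linarith [h1.2, h2.1]
  rcases lt_or_gt_of_ne hne with h | h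
  · exact key j k h hj hk
  · exact key k j h hk hj

lemma sliceNormC_zero (n : ℕ) (t : ℝ) {r : ℝ} (hr : 0 < r) {q : ℝ≥0∞}
    (hq0 : q ≠ 0) (hq' : q ≠ ∞) : sliceNormC n t r q 0 = 0 := by
  have : (fun y : En n => ((‖(0 : En n → ℂ) y‖₊ : ℝ≥0∞))) = fun _ => 0 := by
    funext y; simp
  rw [sliceNormC, this, sliceNorm_zero_fun n t hr hq0 hq']

/-- block decomposition of the homogeneous Herz-slice space (direct direction). -/
theorem homHerzSlice_block_decomposition
    (n : ℕ) (hn : 1 ≤ n) (α t r : ℝ) (hα : 0 < α) (ht : 0 < t) (hr : 1 < r)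
    (p : ℝ≥0∞) (hp : 0 < p) (hp' : p ≠ ∞) (q : ℝ≥0∞) (hq : 1 ≤ q) (hq' : q ≠ ∞) :
    ∃ C₁ C₂ : ℝ≥0, 0 < C₁ ∧ 0 < C₂ ∧
      ∀ f : En n → ℂ, Measurable f → herzHomC n t r q α p f < ∞ →
        ∃ (lam : ℤ → ℝ≥0) (b : ℤ → En n → ℂ),
          (∀ k, Measurable (b k)) ∧
          (∀ k, Function.support (b k) ⊆ ballZ n k) ∧
          (∀ k, sliceNormC n t r q (b k) ≤ (C₁ : ℝ≥0∞) * (2 : ℝ≥0∞) ^ (-(k : ℝ) * α)) ∧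
          (∀ᵐ x ∂(volume : Measure (En n)), f x = ∑' k : ℤ, ((lam k : ℝ) : ℂ) * b k x) ∧
          ∑' k : ℤ, ((lam k : ℝ≥0∞)) ^ p.toReal
            ≤ (C₂ : ℝ≥0∞) * herzHomC n t r q α p f ^ p.toReal := by
  classical
  have hq0 : q ≠ 0 := (zero_lt_one.trans_le hq).ne'
  have hpt : 0 < p.toReal := ENNReal.toReal_pos hp.ne' hp'
  have hr0 : (0:ℝ) < r := lt_trans zero_lt_one hr
  refine ⟨1, 1, one_pos, one_pos, ?_⟩
  intro f hf hfin
  set g : En n → ℝ≥0∞ := fun y => (‖f y‖₊ : ℝ≥0∞) with hgdef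
  have hgmeas : Measurable g := hf.nnnorm.coe_nnreal_ennreal
  set N : ℤ → ℝ≥0∞ := fun k => sliceNorm n t r q ((shell n k).indicator g) with hNdef
  have hshellmeas : ∀ k : ℤ, MeasurableSet (shell n k) := fun k =>
    measurableSet_closedBall.diff measurableSet_closedBall
  have h2ne : ∀ k : ℤ, (2:ℝ≥0∞) ^ ((k:ℝ) * α) ≠ ∞ := by
    intro k; simp [ENNReal.rpow_eq_top_iff]
  have h2pos : ∀ k : ℤ, (2:ℝ≥0∞) ^ ((k:ℝ) * α) ≠ 0 := by
    intro k
    exact (ENNReal.rpow_pos (by norm_num) (by norm_num)).ne'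
  -- finiteness of the sum
  have hsum : ∑' k : ℤ, ((2:ℝ≥0∞) ^ ((k:ℝ) * α) * N k) ^ p.toReal ≠ ∞ := by
    intro hS
    rw [herzHomC, herzHom, if_neg hp'] at hfin
    rw [hS] at hfin
    rw [ENNReal.top_rpow_of_pos (by positivity)] at hfin
    exact (lt_irrefl _) hfin
  have hNfin : ∀ k, N k ≠ ∞ := by
    intro k h
    apply hsum
    apply top_le_iff.mp
    have h1 : ((2:ℝ≥0∞) ^ ((k:ℝ) * α) * N k) ^ p.toReal = ∞ := by
      rw [h, ENNReal.mul_top (h2pos k), ENNReal.top_rpow_of_pos hpt]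
    calc (⊤:ℝ≥0∞) = ((2:ℝ≥0∞) ^ ((k:ℝ) * α) * N k) ^ p.toReal := h1.symm
      _ ≤ _ := ENNReal.le_tsum k
  -- the decomposition
  set lam : ℤ → ℝ≥0 := fun k => ((2:ℝ≥0∞) ^ ((k:ℝ) * α) * N k).toNNReal with hlamdef
  set b : ℤ → En n → ℂ := fun k =>
    if N k = 0 then 0
    else fun x => (((2:ℝ) ^ (-(k:ℝ) * α) / (N k).toReal : ℝ)) • (shell n k).indicator f x
    with hbdef
  have hb_of_ne : ∀ k, N k ≠ 0 → b k = fun x =>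
      (((2:ℝ) ^ (-(k:ℝ) * α) / (N k).toReal : ℝ)) • (shell n k).indicator f x := by
    intro k hk; rw [hbdef]; simp only [if_neg hk]
  refine ⟨lam, b, ?_, ?_, ?_, ?_, ?_⟩
  · -- measurability
    intro k
    by_cases hk : N k = 0
    · rw [hbdef]; simp only [if_pos hk]; exact measurable_const
    · rw [hb_of_ne k hk]
      exact (measurable_const (a := ((2:ℝ) ^ (-(k:ℝ) * α) / (N k).toReal : ℝ))).smul (hf.indicator (hshellmeas k))
  · -- support
    intro k
    by_cases hk : N k = 0
    · rw [hbdef]; simp only [if_pos hk]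
      simp
    · rw [hb_of_ne k hk]
      intro x hx
      by_contra hxB
      apply hx
      have hxs : x ∉ shell n k := fun h => hxB h.1
      simp [Set.indicator_of_notMem hxs]
  · -- slice norm bound
    intro k
    by_cases hk : N k = 0
    · rw [hbdef]; simp only [if_pos hk]
      rw [sliceNormC_zero n t hr0 hq0 hq']
      exact zero_le
    · have hNpos : 0 < (N k).toReal := ENNReal.toReal_pos hk (hNfin k)
      set c : ℝ := (2:ℝ) ^ (-(k:ℝ) * α) / (N k).toReal with hcdef
      have hc0 : 0 < c := div_pos (Real.rpow_pos_of_pos two_pos _) hNpos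
      have heq : (fun y => ((‖b k y‖₊ : ℝ≥0∞))) =
          fun y => ((‖c‖₊ : ℝ≥0∞)) * (shell n k).indicator g y := by
        funext y
        rw [hb_of_ne k hk]
        simp only [nnnorm_smul, ENNReal.coe_mul]
        congr 1
        by_cases hy : y ∈ shell n k
        · rw [Set.indicator_of_mem hy, Set.indicator_of_mem hy]
        · rw [Set.indicator_of_notMem hy, Set.indicator_of_notMem hy]; simp
      rw [sliceNormC, heq, sliceNorm_const_mul n t hr0 hq0 hq' ENNReal.coe_ne_top]
      have hcoe : ((‖c‖₊ : ℝ≥0∞)) = ENNReal.ofReal ((2:ℝ) ^ (-(k:ℝ) * α)) / N k := by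
        rw [← enorm_eq_nnnorm, Real.enorm_eq_ofReal hc0.le, hcdef,
          ENNReal.ofReal_div_of_pos hNpos, ENNReal.ofReal_toReal (hNfin k)]
      have hNrfl : sliceNorm n t r q ((shell n k).indicator g) = N k := rfl
      rw [hcoe, hNrfl, ENNReal.div_mul_cancel hk (hNfin k),
        ← ENNReal.ofReal_rpow_of_pos two_pos]
      simp [ENNReal.ofReal_ofNat]
  · -- a.e. representation
    have hzero : ∀ᵐ x ∂(volume : Measure (En n)),
        ∀ k : ℤ, N k = 0 → (shell n k).indicator g x = 0 := by
      rw [ae_all_iff]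
      intro k
      by_cases hk : N k = 0
      · filter_upwards [ae_zero_of_sliceNorm_eq_zero n ht hr0 hq0 hq'
          (hgmeas.indicator (hshellmeas k)) hk] with x hx
        intro _; exact hx
      · exact Filter.Eventually.of_forall fun x h => absurd h hk
    have hne0 : ∀ᵐ x ∂(volume : Measure (En n)), x ≠ 0 := by
      haveI : Nonempty (Fin n) := ⟨⟨0, hn⟩⟩
      have : volume ({0} : Set (En n)) = 0 := measure_singleton 0
      rw [Filter.Eventually, mem_ae_iff]
      convert this using 2
      ext x; simp
    filter_upwards [hzero, hne0] with x hx hx0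
    set k0 : ℤ := ⌈Real.logb 2 ‖x‖⌉ with hk0def
    have hmem : x ∈ shell n k0 := mem_shell_self n x hx0
    rw [tsum_eq_single k0]
    · by_cases hk : N k0 = 0
      · have hb0 : b k0 x = 0 := by rw [hbdef]; simp only [if_pos hk]; rfl
        have : g x = 0 := by
          have := hx k0 hk
          rwa [Set.indicator_of_mem hmem] at this
        have hfx : f x = 0 := by
          have h' : ((‖f x‖₊ : ℝ≥0∞)) = 0 := this
          rw [ENNReal.coe_eq_zero] at h'
          simpa using h' 
        rw [hfx, hb0, mul_zero]
      · rw [hb_of_ne k0 hk]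
        simp only [Set.indicator_of_mem hmem]
        have hNpos : 0 < (N k0).toReal := ENNReal.toReal_pos hk (hNfin k0)
        have hlamval : ((lam k0 : ℝ)) = (2:ℝ) ^ ((k0:ℝ) * α) * (N k0).toReal := by
          rw [hlamdef]
          simp only [ENNReal.coe_toNNReal_eq_toReal]
          rw [ENNReal.toReal_mul, ← ENNReal.toReal_rpow]
          norm_num
        rw [Complex.real_smul, ← mul_assoc, ← Complex.ofReal_mul, hlamval]
        have h2 : (2:ℝ) ^ ((k0:ℝ) * α) * ((2:ℝ) ^ (-(k0:ℝ) * α)) = 1 := by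
          rw [← Real.rpow_add two_pos]
          norm_num
        have hval : (2:ℝ) ^ ((k0:ℝ) * α) * (N k0).toReal *
            ((2:ℝ) ^ (-(k0:ℝ) * α) / (N k0).toReal) = 1 := by
          rw [div_eq_mul_inv]
          calc (2:ℝ) ^ ((k0:ℝ) * α) * (N k0).toReal *
              ((2:ℝ) ^ (-(k0:ℝ) * α) * ((N k0).toReal)⁻¹)
              = ((2:ℝ) ^ ((k0:ℝ) * α) * (2:ℝ) ^ (-(k0:ℝ) * α)) *
                ((N k0).toReal * ((N k0).toReal)⁻¹) := by ring
            _ = 1 := by rw [h2, mul_inv_cancel₀ hNpos.ne', one_mul]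
        rw [hval]
        simp
    · intro j hj
      by_cases hk : N j = 0
      · rw [hbdef]; simp only [if_pos hk]; simp
      · rw [hb_of_ne j hk]
        have hxj : x ∉ shell n j := fun h => hj (shell_unique h hmem)
        simp [Set.indicator_of_notMem hxj]
  · -- the sum bound
    have hlamval : ∀ k : ℤ, ((lam k : ℝ≥0∞)) = (2:ℝ≥0∞) ^ ((k:ℝ) * α) * N k := by
      intro k
      rw [hlamdef]
      exact ENNReal.coe_toNNReal (ENNReal.mul_ne_top (h2ne k) (hNfin k))
    calc ∑' k : ℤ, ((lam k : ℝ≥0∞)) ^ p.toReal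
        = ∑' k : ℤ, ((2:ℝ≥0∞) ^ ((k:ℝ) * α) * N k) ^ p.toReal := by
          congr 1; funext k; rw [hlamval k]
      _ = herzHomC n t r q α p f ^ p.toReal := by
          rw [herzHomC, herzHom, if_neg hp', ← ENNReal.rpow_mul,
            one_div_mul_cancel hpt.ne', ENNReal.rpow_one]
      _ ≤ 1 * herzHomC n t r q α p f ^ p.toReal := by rw [one_mul]
end
end

section
/- Let n ≥ 1, α ∈ ℝ, t ∈ (0,∞), p ∈ (1,∞), r ∈ (1,∞), q ∈ [1,∞), and let p', q', r' be conjugate exponents (1/p+1/p' = 1/q+1/q' = 1/r+1/r' = 1). Then for all measurable functions T, f : ℝⁿ → ℂ, ∫_{ℝⁿ} |T(x) f(x)| dx ≤ ‖T‖_{(K̇E^{-α,p'}_{q',r'})_t} · ‖f‖_{(K̇E^{α,p}_{q,r})_t}; in particular every T ∈ (K̇E^{-α,p'}_{q',r'})_t(ℝⁿ) induces a bounded linear functional f ↦ ∫_{ℝⁿ} T f on (K̇E^{α,p}_{q,r})_t(ℝⁿ). -/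
open MeasureTheory Metric Set ENNReal
open scoped NNReal

noncomputable section

lemma meas_uncurry (n : ℕ) (t : ℝ) {g : En n → ℝ≥0∞} (hg : Measurable g) :
    Measurable (Function.uncurry fun x y : En n => (ball x t).indicator g y) := by
  have hset : MeasurableSet {p : En n × En n | p.2 ∈ ball p.1 t} := by
    have : Continuous fun p : En n × En n => dist p.2 p.1 :=
      continuous_snd.dist continuous_fst
    exact measurableSet_lt this.measurable measurable_const
  have heq : (Function.uncurry fun x y : En n => (ball x t).indicator g y)
      = {p : En n × En n | p.2 ∈ ball p.1 t}.indicator (fun p => g p.2) := by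
    ext p
    rw [Function.uncurry]
    by_cases h : p.2 ∈ ball p.1 t
    · rw [Set.indicator_of_mem h, Set.indicator_of_mem (by exact h)]
    · rw [Set.indicator_of_notMem h, Set.indicator_of_notMem (by exact h)]
  rw [heq]
  exact (hg.comp measurable_snd).indicator hset

lemma meas_ball_lintegral (n : ℕ) (t : ℝ) {g : En n → ℝ≥0∞} (hg : Measurable g) :
    Measurable fun x : En n => ∫⁻ y in ball x t, g y := by
  have : (fun x : En n => ∫⁻ y in ball x t, g y)
      = fun x => ∫⁻ y, (ball x t).indicator g y := by
    funext x; rw [lintegral_indicator measurableSet_ball]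
  rw [this]
  exact Measurable.lintegral_prod_right (meas_uncurry n t hg)

lemma avg_lintegral (n : ℕ) {t : ℝ} (ht : 0 < t) (w : En n → ℝ≥0∞) (hw : Measurable w) :
    ∫⁻ x, (volume (ball x t))⁻¹ * ∫⁻ y in ball x t, w y = ∫⁻ y, w y := by
  set c := volume (ball (0 : En n) t) with hc
  have hc0 : c ≠ 0 := (measure_ball_pos _ _ ht).ne'
  have hct : c ≠ ∞ := measure_ball_lt_top.ne
  have hball : ∀ x : En n, volume (ball x t) = c := fun x =>
    Measure.addHaar_ball_center _ _ _
  have hmemb : ∀ x y : En n, y ∈ ball x t ↔ x ∈ ball y t := by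
    intro x y; simp [mem_ball, dist_comm]
  have hset : MeasurableSet {p : En n × En n | p.2 ∈ ball p.1 t} := by
    have : Continuous fun p : En n × En n => dist p.2 p.1 :=
      continuous_snd.dist continuous_fst
    exact measurableSet_lt this.measurable measurable_const
  have hF : Measurable (Function.uncurry fun x y : En n =>
      (ball x t).indicator w y) := by
    have heq : (Function.uncurry fun x y : En n => (ball x t).indicator w y)
        = {p : En n × En n | p.2 ∈ ball p.1 t}.indicator (fun p => w p.2) := by
      ext p
      rw [Function.uncurry]
      by_cases h : p.2 ∈ ball p.1 t
      · rw [Set.indicator_of_mem h, Set.indicator_of_mem (by exact h)]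
      · rw [Set.indicator_of_notMem h, Set.indicator_of_notMem (by exact h)]
    rw [heq]
    exact (hw.comp measurable_snd).indicator hset
  calc ∫⁻ x, (volume (ball x t))⁻¹ * ∫⁻ y in ball x t, w y
      = ∫⁻ x : En n, c⁻¹ * ∫⁻ y, (ball x t).indicator w y := by
        simp_rw [hball, lintegral_indicator measurableSet_ball]
    _ = c⁻¹ * ∫⁻ x : En n, ∫⁻ y, (ball x t).indicator w y :=
        lintegral_const_mul' _ _ (ENNReal.inv_ne_top.2 hc0)
    _ = c⁻¹ * ∫⁻ y : En n, ∫⁻ x, (ball x t).indicator w y := by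
        rw [lintegral_lintegral_swap hF.aemeasurable]
    _ = c⁻¹ * ∫⁻ y : En n, w y * c := by
        congr 1
        refine lintegral_congr fun y => ?_
        have : ∀ x : En n, (ball x t).indicator w y
            = (ball y t).indicator (fun _ => w y) x := by
          intro x
          by_cases h : y ∈ ball x t
          · rw [Set.indicator_of_mem h, Set.indicator_of_mem ((hmemb x y).1 h)]
          · rw [Set.indicator_of_notMem h,
              Set.indicator_of_notMem (fun hh => h ((hmemb x y).2 hh))]
        rw [lintegral_congr this]
        rw [lintegral_indicator measurableSet_ball, setLIntegral_const, hball]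
    _ = ∫⁻ y, w y := by
        rw [lintegral_mul_const' _ _ hct, mul_comm (∫⁻ y, w y) c, ← mul_assoc,
          ENNReal.inv_mul_cancel hc0 hct, one_mul]

lemma mem_shell {n : ℕ} {k : ℤ} {x : En n} :
    x ∈ shell n k ↔ (2:ℝ) ^ (k-1) < ‖x‖ ∧ ‖x‖ ≤ (2:ℝ) ^ k := by
  simp only [shell, ballZ, Set.mem_diff, mem_closedBall, dist_zero_right, not_le]
  tauto

lemma measurableSet_shell (n : ℕ) (k : ℤ) : MeasurableSet (shell n k) :=
  measurableSet_closedBall.diff measurableSet_closedBall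

lemma shell_disjoint (n : ℕ) : Pairwise (Function.onFun Disjoint (shell n)) := by
  have key : ∀ k l : ℤ, k < l → Disjoint (shell n k) (shell n l) := by
    intro k l hkl
    rw [Set.disjoint_left]
    intro x hxk hxl
    rw [mem_shell] at hxk hxl
    have h1 : (2:ℝ) ^ k ≤ (2:ℝ) ^ (l-1) :=
      zpow_le_zpow_right₀ one_le_two (by omega)
    linarith [hxk.2, hxl.1]
  intro k l hkl
  rcases lt_or_gt_of_ne hkl with h | h
  · exact key k l h
  · exact (key l k h).symm

lemma iUnion_shell (n : ℕ) : (⋃ k : ℤ, shell n k) = {(0 : En n)}ᶜ := by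
  ext x
  simp only [Set.mem_iUnion, Set.mem_compl_iff, Set.mem_singleton_iff]
  constructor
  · rintro ⟨k, hk⟩ rfl
    rw [mem_shell] at hk
    simp only [norm_zero] at hk
    exact absurd hk.1 (not_lt.2 (_root_.zpow_pos two_pos _).le).elim
  · intro hx
    have h0 : 0 < ‖x‖ := norm_pos_iff.2 hx
    obtain ⟨m, hm⟩ := exists_mem_Ioc_zpow h0 one_lt_two
    exact ⟨m + 1, mem_shell.2 ⟨by simpa using hm.1, by simpa using hm.2⟩⟩

lemma lintegral_eq_tsum_shell (n : ℕ) (hn : 1 ≤ n) (w : En n → ℝ≥0∞) :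
    ∫⁻ y, w y = ∑' k : ℤ, ∫⁻ y, (shell n k).indicator w y := by
  haveI : Nontrivial (En n) := by
    refine ⟨EuclideanSpace.single ⟨0, hn⟩ 1, 0, fun h => ?_⟩
    have := congrArg (fun v : En n => v ⟨0, hn⟩) h
    rw [EuclideanSpace.single_apply] at this
    simp at this
  have h0 : (volume : Measure (En n)) {0} = 0 := measure_singleton 0
  simp_rw [lintegral_indicator (measurableSet_shell n _)]
  rw [← lintegral_iUnion (measurableSet_shell n) (shell_disjoint n), iUnion_shell]
  rw [← lintegral_add_compl w (measurableSet_singleton (0 : En n)),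
    setLIntegral_measure_zero _ _ h0, zero_add]

lemma conj_toReal {a b : ℝ≥0∞} (ha : 1 < a) (hat : a ≠ ∞) (hab : 1/a + 1/b = 1) :
    a.toReal.HolderConjugate b.toReal := by
  have ha0 : a ≠ 0 := (zero_lt_one.trans ha).ne'
  have hb0 : b ≠ 0 := by
    rintro rfl
    simp [ENNReal.div_zero] at hab
  have hbt : b ≠ ∞ := by
    rintro rfl
    rw [ENNReal.div_top, add_zero, ENNReal.div_eq_one_iff ha0 hat] at hab
    exact ha.ne' hab.symm
  rw [Real.holderConjugate_iff]
  constructor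
  · rw [← ENNReal.toReal_one]
    exact (ENNReal.toReal_lt_toReal one_ne_top hat).2 ha
  · have := congrArg ENNReal.toReal hab
    rw [ENNReal.toReal_add (by simp [one_div, ENNReal.inv_ne_top, ha0])
      (by simp [one_div, ENNReal.inv_ne_top, hb0]), ENNReal.toReal_one] at this
    simpa [one_div, ENNReal.toReal_inv] using this

lemma tsum_holder {s s' : ℝ} (hss' : s.HolderConjugate s') (a b : ℤ → ℝ≥0∞) :
    ∑' k, a k * b k ≤ (∑' k, a k ^ s) ^ (1/s) * (∑' k, b k ^ s') ^ (1/s') := by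
  have := ENNReal.lintegral_mul_le_Lp_mul_Lq (Measure.count : Measure ℤ) hss'
    (measurable_of_countable a).aemeasurable (measurable_of_countable b).aemeasurable
  simpa [lintegral_count] using this

lemma slice_holder (n : ℕ) {t r r' : ℝ} (ht : 0 < t) (hr : 1 < r) (hrr' : 1/r + 1/r' = 1)
    {q q' : ℝ≥0∞} (hq : 1 ≤ q) (hq' : q ≠ ∞) (hqq' : 1/q + 1/q' = 1)
    (u v : En n → ℝ≥0∞) (hu : Measurable u) (hv : Measurable v) :
    ∫⁻ y, u y * v y ≤ sliceNorm n t r' q' u * sliceNorm n t r q v := by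
  have hconj : r.HolderConjugate r' := Real.holderConjugate_iff.2 ⟨hr, by simpa [one_div] using hrr'⟩
  have hr'1 : 1 < r' := hconj.symm.lt
  have hr'pos : (0:ℝ) ≤ 1/r' := by positivity
  have hrpos : (0:ℝ) ≤ 1/r := by positivity
  set A : En n → ℝ≥0∞ := fun x =>
    ((volume (ball x t))⁻¹ * ∫⁻ y in ball x t, u y ^ r') ^ (1/r') with hA_def
  set B : En n → ℝ≥0∞ := fun x =>
    ((volume (ball x t))⁻¹ * ∫⁻ y in ball x t, v y ^ r) ^ (1/r) with hB_def
  have hball : ∀ x : En n, volume (ball x t) = volume (ball (0 : En n) t) := fun x =>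
    Measure.addHaar_ball_center _ _ _
  have hc0 : volume (ball (0 : En n) t) ≠ 0 := (measure_ball_pos _ _ ht).ne'
  have hct : volume (ball (0 : En n) t) ≠ ∞ := measure_ball_lt_top.ne
  have hA : Measurable A := by
    have : A = fun x =>
        ((volume (ball (0 : En n) t))⁻¹ * ∫⁻ y in ball x t, u y ^ r') ^ (1/r') := by
      funext x
      show ((volume (ball x t))⁻¹ * ∫⁻ y in ball x t, u y ^ r') ^ (1/r') = _
      rw [hball]
    rw [this]
    exact (measurable_const.mul (meas_ball_lintegral n t (hu.pow_const r'))).pow_const _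
  have hB : Measurable B := by
    have : B = fun x =>
        ((volume (ball (0 : En n) t))⁻¹ * ∫⁻ y in ball x t, v y ^ r) ^ (1/r) := by
      funext x
      show ((volume (ball x t))⁻¹ * ∫⁻ y in ball x t, v y ^ r) ^ (1/r) = _
      rw [hball]
    rw [this]
    exact (measurable_const.mul (meas_ball_lintegral n t (hv.pow_const r))).pow_const _
  have key : ∀ x : En n,
      (volume (ball x t))⁻¹ * ∫⁻ y in ball x t, u y * v y ≤ A x * B x := by
    intro x
    have hd0 : (volume (ball x t)) ≠ 0 := by rw [hball]; exact hc0
    have hdt : (volume (ball x t)) ≠ ∞ := by rw [hball]; exact hct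
    have H := ENNReal.lintegral_mul_le_Lp_mul_Lq (volume.restrict (ball x t)) hconj.symm
      hu.aemeasurable hv.aemeasurable
    calc (volume (ball x t))⁻¹ * ∫⁻ y in ball x t, u y * v y
        ≤ (volume (ball x t))⁻¹ *
          ((∫⁻ y in ball x t, u y ^ r') ^ (1/r') * (∫⁻ y in ball x t, v y ^ r) ^ (1/r)) :=
          mul_le_mul_right H _
      _ = A x * B x := by
          show _ = ((volume (ball x t))⁻¹ * ∫⁻ y in ball x t, u y ^ r') ^ (1/r')
            * ((volume (ball x t))⁻¹ * ∫⁻ y in ball x t, v y ^ r) ^ (1/r)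
          rw [ENNReal.mul_rpow_of_nonneg _ _ hr'pos, ENNReal.mul_rpow_of_nonneg _ _ hrpos,
            mul_mul_mul_comm, ← ENNReal.rpow_add _ _ (ENNReal.inv_ne_zero.2 hdt)
              (ENNReal.inv_ne_top.2 hd0)]
          have : 1/r' + 1/r = 1 := by linarith
          rw [this, ENNReal.rpow_one]
  calc ∫⁻ y, u y * v y
      = ∫⁻ x, (volume (ball x t))⁻¹ * ∫⁻ y in ball x t, u y * v y :=
        (avg_lintegral n ht _ (hu.mul hv)).symm
    _ ≤ ∫⁻ x, A x * B x := lintegral_mono key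
    _ ≤ sliceNorm n t r' q' u * sliceNorm n t r q v := by
        by_cases hq'top : q' = ∞
        · have hq1 : q = 1 := by
            rw [hq'top] at hqq'
            simp only [ENNReal.div_top, add_zero] at hqq'
            rw [ENNReal.div_eq_one_iff (by rintro rfl; simp at hqq') hq'] at hqq'
            exact hqq'.symm
          subst hq1; subst hq'top
          calc ∫⁻ x, A x * B x
              ≤ ∫⁻ x, essSup A volume * B x :=
                lintegral_mono_ae ((_root_.ae_le_essSup (f := A)).mono
                  fun x hx => mul_le_mul_left hx _)
            _ = essSup A volume * ∫⁻ x, B x := lintegral_const_mul _ hB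
            _ = sliceNorm n t r' ∞ u * sliceNorm n t r 1 v := by
                rw [sliceNorm, if_pos rfl, sliceNorm, if_neg one_ne_top]
                simp only [ENNReal.toReal_one, one_div_one, ENNReal.rpow_one]
                rfl
        · have hq1 : 1 < q := by
            rcases hq.lt_or_eq with h | h
            · exact h
            · exfalso; apply hq'top
              rw [← h] at hqq'
              simp only [one_div, inv_one] at hqq'
              have : q'⁻¹ = 0 := (ENNReal.add_right_inj one_ne_top).1
                (by rw [add_zero]; exact hqq')
              rwa [ENNReal.inv_eq_zero] at this
          have hqc := conj_toReal hq1 hq' hqq'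
          have H := ENNReal.lintegral_mul_le_Lp_mul_Lq (volume : Measure (En n)) hqc.symm
            hA.aemeasurable hB.aemeasurable
          rw [sliceNorm, if_neg hq'top, sliceNorm, if_neg hq']
          exact H

/-- Hölder's inequality for homogeneous Herz-slice spaces; every element of the
dual-index space induces a bounded linear functional. -/
theorem homHerzSlice_holder
    (n : ℕ) (hn : 1 ≤ n) (α t r r' : ℝ) (ht : 0 < t) (hr : 1 < r)
    (hrr' : 1 / r + 1 / r' = 1)
    (p p' : ℝ≥0∞) (hp : 1 < p) (hp' : p ≠ ∞) (hpp' : 1 / p + 1 / p' = 1)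
    (q q' : ℝ≥0∞) (hq : 1 ≤ q) (hq' : q ≠ ∞) (hqq' : 1 / q + 1 / q' = 1)
    (T f : En n → ℂ) (hT : Measurable T) (hf : Measurable f) :
    ∫⁻ x, (‖T x‖₊ : ℝ≥0∞) * (‖f x‖₊ : ℝ≥0∞)
      ≤ herzHomC n t r' q' (-α) p' T * herzHomC n t r q α p f := by
  set h : En n → ℝ≥0∞ := fun y => (‖T y‖₊ : ℝ≥0∞) with hh_def
  set g : En n → ℝ≥0∞ := fun y => (‖f y‖₊ : ℝ≥0∞) with hg_def
  have hhm : Measurable h := hT.nnnorm.coe_nnreal_ennreal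
  have hgm : Measurable g := hf.nnnorm.coe_nnreal_ennreal
  have hp'top : p' ≠ ∞ := by
    rintro rfl
    rw [ENNReal.div_top, add_zero,
      ENNReal.div_eq_one_iff (zero_lt_one.trans hp).ne' hp'] at hpp'
    exact hp.ne' hpp'.symm
  have hpc : p.toReal.HolderConjugate p'.toReal := conj_toReal hp hp' hpp'
  set a : ℤ → ℝ≥0∞ := fun k => sliceNorm n t r' q' ((shell n k).indicator h) with ha_def
  set b : ℤ → ℝ≥0∞ := fun k => sliceNorm n t r q ((shell n k).indicator g) with hb_def
  have hw : ∀ k : ℤ, (2:ℝ≥0∞) ^ ((k:ℝ) * (-α)) * (2:ℝ≥0∞) ^ ((k:ℝ) * α) = 1 := by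
    intro k
    rw [← ENNReal.rpow_add _ _ two_ne_zero ENNReal.ofNat_ne_top]
    have : (k:ℝ) * (-α) + (k:ℝ) * α = 0 := by ring
    rw [this, ENNReal.rpow_zero]
  calc ∫⁻ x, h x * g x
      = ∑' k : ℤ, ∫⁻ x, (shell n k).indicator (fun y => h y * g y) x :=
        lintegral_eq_tsum_shell n hn _
    _ ≤ ∑' k : ℤ, a k * b k := by
        refine ENNReal.tsum_le_tsum fun k => ?_
        have heq : ∀ x, (shell n k).indicator (fun y => h y * g y) x
            = (shell n k).indicator h x * (shell n k).indicator g x := by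
          intro x
          by_cases hx : x ∈ shell n k
          · rw [Set.indicator_of_mem hx, Set.indicator_of_mem hx, Set.indicator_of_mem hx]
          · rw [Set.indicator_of_notMem hx, Set.indicator_of_notMem hx, zero_mul]
        rw [lintegral_congr heq]
        exact slice_holder n ht hr hrr' hq hq' hqq' _ _
          (hhm.indicator (measurableSet_shell n k)) (hgm.indicator (measurableSet_shell n k))
    _ = ∑' k : ℤ, ((2:ℝ≥0∞) ^ ((k:ℝ) * (-α)) * a k) * ((2:ℝ≥0∞) ^ ((k:ℝ) * α) * b k) := by
        refine tsum_congr fun k => ?_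
        rw [mul_mul_mul_comm, hw k, one_mul]
    _ ≤ (∑' k : ℤ, ((2:ℝ≥0∞) ^ ((k:ℝ) * (-α)) * a k) ^ p'.toReal) ^ (1/p'.toReal)
        * (∑' k : ℤ, ((2:ℝ≥0∞) ^ ((k:ℝ) * α) * b k) ^ p.toReal) ^ (1/p.toReal) :=
        tsum_holder hpc.symm _ _
    _ = herzHomC n t r' q' (-α) p' T * herzHomC n t r q α p f := by
        rw [herzHomC, herzHom, if_neg hp'top, herzHomC, herzHom, if_neg hp']
end
end
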